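/- Let Φ : U → ℝ⁴, Φ(x) = (x₁ + (1/2)x₂, x₃ + (1/2)x₄, x₂, (1/3 + (1/2)cos(x₂))x₃ + (1/3)x₄) on U = {x ∈ ℝ⁴ : cos(x₂) > 2/3}. Then the Jacobian Φ'(x) is invertible for every x ∈ U, so Φ is a local diffeomorphism on U. -/

import Mathlib

open Real

/-- The Byrnes–Isidori transformation Φ has invertible Jacobian on
    U = {x : cos x₂ > 2/3}, i.e. its Fréchet derivative at each point of U
    is a continuous linear equivalence (so Φ is a local diffeomorphism on U). -/
theorem BI_transformation_local_diffeo :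
    let Φ : (Fin 4 → ℝ) → (Fin 4 → ℝ) := fun x =>
      ![x 0 + (1/2) * x 1,
        x 2 + (1/2) * x 3,
        x 1,
        (1/3 + (1/2) * Real.cos (x 1)) * x 2 + (1/3) * x 3]
    ∀ x : Fin 4 → ℝ, Real.cos (x 1) > 2/3 →
      ∃ e : (Fin 4 → ℝ) ≃L[ℝ] (Fin 4 → ℝ),
        HasFDerivAt Φ (e : (Fin 4 → ℝ) →L[ℝ] (Fin 4 → ℝ)) x := by
  intro Φ x hx
  set pr : Fin 4 → (Fin 4 → ℝ) →L[ℝ] ℝ := fun i => ContinuousLinearMap.proj i with hpr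
  set L : (Fin 4 → ℝ) →L[ℝ] (Fin 4 → ℝ) := ContinuousLinearMap.pi
    ![pr 0 + (1/2 : ℝ) • pr 1,
      pr 2 + (1/2 : ℝ) • pr 3,
      pr 1,
      ((-Real.sin (x 1) * (1/2)) * x 2) • pr 1
        + (1/3 + (1/2) * Real.cos (x 1)) • pr 2 + (1/3 : ℝ) • pr 3] with hL
  have hder : HasFDerivAt Φ L x := by
    apply hasFDerivAt_pi''
    intro i
    rw [hL, ContinuousLinearMap.proj_pi]
    fin_cases i <;>
      simp only [Φ, Matrix.cons_val_zero, Matrix.cons_val_one, Matrix.head_cons,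
        Matrix.cons_val_two, Matrix.tail_cons, Matrix.cons_val_three, Fin.isValue]
    · exact ((pr 0).hasFDerivAt.add (((pr 1).hasFDerivAt).const_smul (1/2:ℝ))).congr_fderiv
        (by ext v; simp [pr, smul_eq_mul])
    · exact ((pr 2).hasFDerivAt.add (((pr 3).hasFDerivAt).const_smul (1/2:ℝ))).congr_fderiv
        (by ext v; simp [pr, smul_eq_mul])
    · exact (pr 1).hasFDerivAt
    · have hcos : HasFDerivAt (fun y : Fin 4 → ℝ => Real.cos (y 1))
          ((-Real.sin (x 1)) • pr 1) x :=
        HasDerivAt.comp_hasFDerivAt (h₂ := Real.cos) x (Real.hasDerivAt_cos (x 1)) (pr 1).hasFDerivAt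
      have h1 := (hasFDerivAt_const (1/3 : ℝ) x).add (hcos.const_mul (1/2 : ℝ))
      have h2 := (h1.mul (pr 2).hasFDerivAt).add (((pr 3).hasFDerivAt).const_mul (1/3))
      refine h2.congr_fderiv ?_
      ext v
      simp [pr, smul_eq_mul]
      ring
  -- bijectivity of L
  have hd : (1/2) * Real.cos (x 1) - 1/3 ≠ 0 := by
    have : (1/3 : ℝ) < (1/2) * Real.cos (x 1) := by linarith
    linarith
  have hinj : Function.Injective L := by
    intro v w hvw
    have h := fun i => congrFun hvw i
    have h0 := h 0; have h1 := h 1; have h2 := h 2; have h3 := h 3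
    simp only [hL, ContinuousLinearMap.pi_apply, Matrix.cons_val_zero, Matrix.cons_val_one,
      Matrix.head_cons, Matrix.cons_val_two, Matrix.tail_cons, Matrix.cons_val_three,
      ContinuousLinearMap.add_apply, ContinuousLinearMap.smul_apply, smul_eq_mul, hpr,
      ContinuousLinearMap.proj_apply] at h0 h1 h2 h3
    have e1 : v 1 = w 1 := h2
    have e0 : v 0 = w 0 := by linarith
    have e2 : v 2 = w 2 := by
      have : ((1/2) * Real.cos (x 1) - 1/3) * (v 2 - w 2) = 0 := by
        linear_combination h3 - (2/3) * h1 + (Real.sin (x 1) * (1/2) * x 2) * e1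
      rcases mul_eq_zero.mp this with h | h
      · exact absurd h hd
      · linarith
    have e3 : v 3 = w 3 := by linarith
    funext i; fin_cases i <;> assumption
  have hbij : Function.Bijective L :=
    ⟨hinj, LinearMap.injective_iff_surjective.mp hinj⟩
  let eL : (Fin 4 → ℝ) ≃ₗ[ℝ] (Fin 4 → ℝ) :=
    LinearEquiv.ofBijective (L : (Fin 4 → ℝ) →ₗ[ℝ] (Fin 4 → ℝ)) hbij
  refine ⟨eL.toContinuousLinearEquiv, ?_⟩
  have : (eL.toContinuousLinearEquiv : (Fin 4 → ℝ) →L[ℝ] (Fin 4 → ℝ)) = L := by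
    ext v; rfl
  rw [this]; exact hder
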